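/- If α_f < α_g, α_h > 0, and α_g - α_h - α_f < 0, then the function N ↦ (p·c_g·N^{α_g}) / (s·c_f·N^{α_f} + (p·c_g/c_h)·N^{α_g - α_h}) tends to infinity as N → ∞, and it is asymptotically equivalent to (p·c_g/(s·c_f))·N^{α_g - α_f}. -/

import Mathlib

open Filter

theorem speedup_parallel_infty_theta_gf (s p cf cg ch αf αg αh : ℝ)
    (hs : 0 < s) (hp : 0 < p) (hcf : 0 < cf) (hcg : 0 < cg) (hch : 0 < ch)
    (hαf : 0 ≤ αf) (hαg : 0 ≤ αg) (hαh : 0 < αh)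
    (hfg : αf < αg) (hsign : αg - αh - αf < 0) :
    Filter.Tendsto
      (fun N : ℝ => (p * cg * N ^ αg) / (s * cf * N ^ αf + (p * cg / ch) * N ^ (αg - αh)))
      Filter.atTop Filter.atTop ∧
    Filter.Tendsto
      (fun N : ℝ =>
        ((p * cg * N ^ αg) / (s * cf * N ^ αf + (p * cg / ch) * N ^ (αg - αh))) /
          ((p * cg / (s * cf)) * N ^ (αg - αf)))
      Filter.atTop (nhds 1) := by
  have hcpos : 0 < p * cg / (ch * (s * cf)) := by positivity
  -- the small term tends to 0
  have h0 : Tendsto (fun N : ℝ => (p * cg / (ch * (s * cf))) * N ^ (αg - αh - αf)) atTop (nhds 0) := by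
    have := tendsto_rpow_neg_atTop (y := -(αg - αh - αf)) (by linarith)
    simp only [neg_neg] at this
    simpa using this.const_mul _
  have h1 : Tendsto (fun N : ℝ => (1 + (p * cg / (ch * (s * cf))) * N ^ (αg - αh - αf))⁻¹) atTop (nhds 1) := by
    have : Tendsto (fun N : ℝ => 1 + (p * cg / (ch * (s * cf))) * N ^ (αg - αh - αf)) atTop (nhds 1) := by
      simpa using (tendsto_const_nhds (x := (1:ℝ))).add h0
    simpa using this.inv₀ (by norm_num)
  -- eventual equality of the ratio with the simple expression
  have heq : ∀ᶠ N : ℝ in atTop,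
      ((p * cg * N ^ αg) / (s * cf * N ^ αf + (p * cg / ch) * N ^ (αg - αh))) /
        ((p * cg / (s * cf)) * N ^ (αg - αf))
        = (1 + (p * cg / (ch * (s * cf))) * N ^ (αg - αh - αf))⁻¹ := by
    filter_upwards [eventually_gt_atTop 0] with N hN
    have hNf : (0:ℝ) < N ^ αf := Real.rpow_pos_of_pos hN _
    have hNgf : (0:ℝ) < N ^ (αg - αf) := Real.rpow_pos_of_pos hN _
    have hNgh : (0:ℝ) < N ^ (αg - αh) := Real.rpow_pos_of_pos hN _
    have e1 : N ^ αg = N ^ (αg - αf) * N ^ αf := by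
      rw [← Real.rpow_add hN]; ring_nf
    have e2 : N ^ (αg - αh) = N ^ (αg - αh - αf) * N ^ αf := by
      rw [← Real.rpow_add hN]; ring_nf
    have hD : 0 < s * cf * N ^ αf + (p * cg / ch) * N ^ (αg - αh) := by positivity
    rw [e1, e2]
    field_simp
  constructor
  · -- first part: rewrite f = (C N^{αg-αf}) * ratio
    have hC : Tendsto (fun N : ℝ => (p * cg / (s * cf)) * N ^ (αg - αf)) atTop atTop := by
      exact (tendsto_rpow_atTop (by linarith : (0:ℝ) < αg - αf)).const_mul_atTop (by positivity)
    have hr : Tendsto (fun N : ℝ =>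
        ((p * cg * N ^ αg) / (s * cf * N ^ αf + (p * cg / ch) * N ^ (αg - αh))) /
          ((p * cg / (s * cf)) * N ^ (αg - αf))) atTop (nhds 1) :=
      (tendsto_congr' heq).mpr h1
    have := hC.atTop_mul_pos one_pos hr
    apply this.congr'
    filter_upwards [eventually_gt_atTop 0] with N hN
    have hNgf : (0:ℝ) < N ^ (αg - αf) := Real.rpow_pos_of_pos hN _
    have h2 : (p * cg / (s * cf)) * N ^ (αg - αf) ≠ 0 := by positivity
    field_simp
  · exact (tendsto_congr' heq).mpr h1
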